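/- Let T > 0 and K_n the n-th Favard constant, L = 1/(K_n T^n), and for n ≡ 2 (mod 4) define τ(t) = 3T/4 for t ∈ [0,T/2] and τ(t) = T/4 for t ∈ (T/2,T]. Then the problem x^{(n)}(t) = L·x(τ(t)), x^{(i)}(0) = x^{(i)}(T) for i = 0,…,n−1, has a non-constant solution; hence the bound T ≥ (L K_n)^{−1/n} is sharp for such n. -/

import Mathlib

open MeasureTheory intervalIntegral

def eulerNumber : ℕ → ℚ
  | 0 => 1
  | n + 1 =>
    if Odd (n + 1) then 0
    else -∑ k : Fin (n + 1),
      if Even (k : ℕ) then ((n + 1).choose k : ℚ) * eulerNumber k else 0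

/-- The Favard constants `K n`. -/
def favardK (n : ℕ) : ℚ :=
  if Odd n then
    ((2 ^ (n + 1) - 1) * |bernoulli (n + 1)|) / (2 ^ (n - 1) * Nat.factorial (n + 1))
  else |eulerNumber n| / (4 ^ n * Nat.factorial n)
/-- `x` belongs to `AC^{n-1}([0,T])`, its (a.e.) `n`-th derivative is `g`, and all the
derivatives of order `< n` satisfy the periodic boundary conditions `x⁽ⁱ⁾(0) = x⁽ⁱ⁾(T)`. -/
def PeriodicACSol (n : ℕ) (T : ℝ) (x g : ℝ → ℝ) : Prop :=
  ∃ D : ℕ → ℝ → ℝ,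
    D 0 = x ∧ D n = g ∧
    ∀ i < n,
      IntervalIntegrable (D (i + 1)) volume 0 T ∧
      (∀ t ∈ Set.Icc (0 : ℝ) T, D i t = D i 0 + ∫ s in (0 : ℝ)..t, D (i + 1) s) ∧
      D i 0 = D i T

lemma euler_odd {j : ℕ} (h : Odd j) : eulerNumber j = 0 := by
  cases j with
  | zero => simp at h
  | succ m => rw [eulerNumber, if_pos h]

lemma euler_rec {k : ℕ} (hk : Even k) (h2 : k ≠ 0) :
    ∑ j ∈ Finset.range (k+1), (if Even j then (k.choose j : ℚ) * eulerNumber j else 0) = 0 := by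
  obtain ⟨m, rfl⟩ : ∃ m, k = m + 1 := ⟨k - 1, by omega⟩
  have hE : eulerNumber (m+1) = -∑ j : Fin (m+1),
      if Even (j : ℕ) then ((m + 1).choose j : ℚ) * eulerNumber j else 0 := by
    rw [eulerNumber, if_neg (by simpa using Nat.not_odd_iff_even.mpr hk)]
  rw [Finset.sum_range_succ, Fin.sum_univ_eq_sum_range
    (fun j => if Even j then ((m + 1).choose j : ℚ) * eulerNumber j else 0) (m+1)] at *
  rw [if_pos hk, Nat.choose_self, Nat.cast_one, one_mul]
  linarith [hE]

example : eulerNumber 1 = 0 := by norm_num [eulerNumber]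
example : eulerNumber 2 = -1 := by norm_num [eulerNumber, Fin.sum_univ_succ]

noncomputable def qf (T : ℝ) (k : ℕ) (t : ℝ) : ℝ :=
  ∑ j ∈ Finset.range (k+1),
    (eulerNumber j : ℝ) * T^j / (4^j * (Nat.factorial j)) * ((t - T/4)^(k-j) / (Nat.factorial (k-j)))

lemma qf_zero (T : ℝ) : qf T 0 = fun _ => 1 := by
  funext t; simp [qf, eulerNumber]

lemma qf_cont (T : ℝ) (k : ℕ) : Continuous (qf T k) := by
  unfold qf
  exact continuous_finset_sum _ (fun j _ => by fun_prop)

lemma deriv_aux (m : ℕ) (t c : ℝ) :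
    HasDerivAt (fun t : ℝ => (t - c)^(m+1) / (Nat.factorial (m+1))) ((t - c)^m / (Nat.factorial m)) t := by
  have h0 := (((hasDerivAt_id t).sub_const c).pow (m+1)).div_const (Nat.factorial (m+1))
  simp only [Nat.add_sub_cancel, id_eq, mul_one] at h0
  refine h0.congr_deriv ?_
  have hne : (Nat.factorial m : ℝ) ≠ 0 := Nat.cast_ne_zero.mpr (Nat.factorial_ne_zero _)
  have h2 : ((m:ℝ)+1) ≠ 0 := by positivity
  rw [Nat.factorial_succ]
  push_cast
  field_simp

lemma qf_hasDeriv (T : ℝ) (k : ℕ) (t : ℝ) : HasDerivAt (qf T (k+1)) (qf T k t) t := by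
  unfold qf
  have key : ∀ j ∈ Finset.range (k+2), HasDerivAt
      (fun t => (eulerNumber j : ℝ) * T^j / (4^j * (Nat.factorial j)) * ((t - T/4)^(k+1-j) / (Nat.factorial (k+1-j))))
      (if j ≤ k then (eulerNumber j : ℝ) * T^j / (4^j * (Nat.factorial j)) * ((t - T/4)^(k-j) / (Nat.factorial (k-j))) else 0) t := by
    intro j hj
    rcases le_or_gt j k with h | h
    · rw [if_pos h]
      have hm : k+1-j = (k-j)+1 := by omega
      rw [hm]
      exact (deriv_aux (k-j) t (T/4)).const_mul _
    · rw [if_neg (show ¬(j ≤ k) by omega)]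
      have hj' : j = k+1 := by have := Finset.mem_range.mp hj; omega
      subst hj'
      simp only [Nat.sub_self, pow_zero]
      simpa using (hasDerivAt_const t ((eulerNumber (k+1) : ℝ) * T^(k+1) / (4^(k+1) * (Nat.factorial (k+1))) * (1 / (Nat.factorial 0))))
  have H := HasDerivAt.fun_sum key
  refine H.congr_deriv ?_
  refine ((Finset.sum_range_succ _ (k+1)).trans ?_)
  rw [if_neg (show ¬(k+1 ≤ k) by omega), add_zero]
  exact Finset.sum_congr rfl (fun j hj => if_pos (by have := Finset.mem_range.mp hj; omega))

lemma qf_quarter (T : ℝ) (k : ℕ) :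
    qf T k (T/4) = (eulerNumber k : ℝ) * T^k / (4^k * (Nat.factorial k)) := by
  unfold qf
  rw [Finset.sum_eq_single k]
  · simp
  · intro j hj hne
    have hj' := Finset.mem_range.mp hj
    rw [show T/4 - T/4 = 0 by ring, zero_pow (by omega)]
    simp
  · intro h; exact absurd (Finset.self_mem_range_succ k) h

lemma qf_half (T : ℝ) {k : ℕ} (hk : k ≠ 0) : qf T k (T/2) = - qf T k 0 := by
  have key : qf T k (T/2) + qf T k 0 = 0 := by
    unfold qf
    rw [← Finset.sum_add_distrib]
    rcases Nat.even_or_odd k with hke | hko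
    · have : ∀ j ∈ Finset.range (k+1),
          (eulerNumber j : ℝ) * T^j / (4^j * (Nat.factorial j)) * ((T/2 - T/4)^(k-j) / (Nat.factorial (k-j)))
          + (eulerNumber j : ℝ) * T^j / (4^j * (Nat.factorial j)) * ((0 - T/4)^(k-j) / (Nat.factorial (k-j)))
          = (2 * T^k / (4^k * (Nat.factorial k))) * (if Even j then (k.choose j : ℝ) * (eulerNumber j : ℝ) else 0) := by
        intro j hj
        have hj' : j ≤ k := by have := Finset.mem_range.mp hj; omega
        rcases Nat.even_or_odd j with hje | hjo
        · rw [if_pos hje]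
          have hkj : Even (k - j) := (Nat.even_sub hj').mpr (by simp [hke, hje])
          have h1 : (T/2 - T/4) = T/4 := by ring
          have h2 : ((0:ℝ) - T/4)^(k-j) = (T/4)^(k-j) := by
            rw [zero_sub, neg_pow, hkj.neg_one_pow, one_mul]
          rw [h1, h2]
          have hfac : (k.choose j : ℝ) * (Nat.factorial j) * (Nat.factorial (k-j)) = Nat.factorial k := by
            exact_mod_cast congrArg (Nat.cast (R := ℝ)) (Nat.choose_mul_factorial_mul_factorial hj')
          have hj0 : (Nat.factorial j : ℝ) ≠ 0 := Nat.cast_ne_zero.mpr (Nat.factorial_ne_zero _)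
          have hkj0 : (Nat.factorial (k-j) : ℝ) ≠ 0 := Nat.cast_ne_zero.mpr (Nat.factorial_ne_zero _)
          have hk0 : (Nat.factorial k : ℝ) ≠ 0 := Nat.cast_ne_zero.mpr (Nat.factorial_ne_zero _)
          have hTk : (T:ℝ)^j * T^(k-j) = T^k := by rw [← pow_add, Nat.add_sub_cancel' hj']
          have h4 : (4:ℝ)^j * 4^(k-j) = 4^k := by rw [← pow_add, Nat.add_sub_cancel' hj']
          have h5 : (1/4:ℝ)^(k-j) * 4^k = 4^j := by
            rw [← h4, one_div, inv_pow, mul_comm ((4:ℝ)^j), ← mul_assoc, inv_mul_cancel₀ (by positivity), one_mul]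
          field_simp
          linear_combination 2*(eulerNumber j:ℝ)*(Nat.factorial k:ℝ)*(T^j*T^(k-j))*h5
            + 2*(eulerNumber j:ℝ)*(Nat.factorial k:ℝ)*4^j*hTk
            - 2*(eulerNumber j:ℝ)*T^k*4^j*hfac
        · rw [if_neg (by simpa using hjo), euler_odd hjo]
          simp
      rw [Finset.sum_congr rfl this, ← Finset.mul_sum]
      have : ∑ j ∈ Finset.range (k+1), (if Even j then (k.choose j : ℝ) * (eulerNumber j : ℝ) else 0) = 0 := by
        have := euler_rec hke hk
        calc ∑ j ∈ Finset.range (k+1), (if Even j then (k.choose j : ℝ) * (eulerNumber j : ℝ) else 0)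
            = ((∑ j ∈ Finset.range (k+1), (if Even j then (k.choose j : ℚ) * (eulerNumber j) else 0) : ℚ) : ℝ) := by
              push_cast [apply_ite ((↑·) : ℚ → ℝ)]
              norm_cast
          _ = 0 := by rw [this]; simp
      rw [this, mul_zero]
    · apply Finset.sum_eq_zero
      intro j hj
      have hj' : j ≤ k := by have := Finset.mem_range.mp hj; omega
      rcases Nat.even_or_odd j with hje | hjo
      · have hkj : Odd (k - j) := by
          rcases hko with ⟨a, ha⟩; rcases hje with ⟨b, hb⟩
          exact ⟨a - b, by omega⟩
        have h2 : ((0:ℝ) - T/4)^(k-j) = -(T/4)^(k-j) := by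
          rw [zero_sub, neg_pow, hkj.neg_one_pow]; ring
        rw [show T/2 - T/4 = T/4 by ring, h2]
        ring
      · rw [euler_odd hjo]; simp
  linarith

lemma qf_sym (T : ℝ) (k : ℕ) (s : ℝ) : qf T k (T/4 + s) = (-1)^k * qf T k (T/4 - s) := by
  unfold qf
  rw [Finset.mul_sum]
  apply Finset.sum_congr rfl
  intro j hj
  have hj' : j ≤ k := by have := Finset.mem_range.mp hj; omega
  rcases Nat.even_or_odd j with hje | hjo
  · have h1 : T/4 + s - T/4 = s := by ring
    have h2 : T/4 - s - T/4 = -s := by ring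
    rw [h1, h2, neg_pow]
    have : ((-1:ℝ))^k * (-1)^(k-j) = 1 := by
      rw [← pow_add]
      obtain ⟨b, hb⟩ := hje
      exact Even.neg_one_pow ⟨k - b, by omega⟩
    calc (eulerNumber j : ℝ) * T^j / (4^j * (Nat.factorial j)) * (s^(k-j) / (Nat.factorial (k-j)))
        = ((-1:ℝ))^k * (-1)^(k-j) * ((eulerNumber j : ℝ) * T^j / (4^j * (Nat.factorial j)) * (s^(k-j) / (Nat.factorial (k-j)))) := by
          rw [this]; ring
      _ = _ := by ring
  · rw [euler_odd hjo]; simp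

lemma qf_odd_quarter (T : ℝ) {k : ℕ} (hk : Odd k) : qf T k (T/4) = 0 := by
  have := qf_sym T k 0
  rw [add_zero, sub_zero, hk.neg_one_pow] at this
  linarith

lemma qf_even_zero (T : ℝ) {k : ℕ} (hke : Even k) (hk : k ≠ 0) : qf T k 0 = 0 := by
  have h1 := qf_sym T k (T/4)
  rw [show T/4 + T/4 = T/2 by ring, show T/4 - T/4 = 0 by ring, hke.neg_one_pow, one_mul] at h1
  have h2 := qf_half T hk
  linarith

lemma qf2_eq (T : ℝ) (t : ℝ) : qf T 2 t = (t - T/4)^2/2 - T^2/32 := by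
  have e1 : eulerNumber 1 = 0 := by norm_num [eulerNumber]
  have e2 : eulerNumber 2 = -1 := by norm_num [eulerNumber, Fin.sum_univ_succ]
  unfold qf
  rw [Finset.sum_range_succ, Finset.sum_range_succ, Finset.sum_range_succ, Finset.range_zero,
    Finset.sum_empty, e1, e2]
  norm_num [eulerNumber, Nat.factorial]
  ring

lemma qsign (T : ℝ) (hT : 0 < T) : ∀ m, 1 ≤ m → ∀ t ∈ Set.Ioo 0 (T/2),
    0 < (-1:ℝ)^m * qf T (2*m) t := by
  intro m
  induction m with
  | zero => omega
  | succ m ih =>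
    intro _ t ht
    rcases Nat.eq_zero_or_pos m with rfl | hm
    · -- base case : m+1 = 1
      rw [show ((-1:ℝ))^(0+1) = -1 by norm_num, show 2*(0+1) = 2 by norm_num, qf2_eq]
      obtain ⟨h1, h2⟩ := ht
      nlinarith
    · -- inductive step
      have IH := ih hm
      set c : ℝ := (-1:ℝ)^m with hc
      have hT4 : 0 < T/4 := by linarith
      have hT42 : T/4 < T/2 := by linarith
      -- g = qf T (2m+1)
      have hgderiv : ∀ s, HasDerivAt (fun u => c * qf T (2*m+1) u) (c * qf T (2*m) s) s :=
        fun s => (qf_hasDeriv T (2*m) s).const_mul c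
      have hgcont : Continuous (fun u => c * qf T (2*m+1) u) := continuous_const.mul (qf_cont T _)
      have hgmono : StrictMonoOn (fun u => c * qf T (2*m+1) u) (Set.Icc 0 (T/2)) := by
        apply strictMonoOn_of_deriv_pos (convex_Icc 0 (T/2)) hgcont.continuousOn
        intro s hs
        rw [interior_Icc] at hs
        rw [(hgderiv s).deriv]
        exact IH s hs
      have hgq : qf T (2*m+1) (T/4) = 0 := qf_odd_quarter T ⟨m, by ring⟩
      have hgq' : c * qf T (2*m+1) (T/4) = 0 := by rw [hgq, mul_zero]
      -- h = qf T (2m+2)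
      have hh0 : qf T (2*m+2) 0 = 0 := qf_even_zero T ⟨m+1, by ring⟩ (by omega)
      have hhT2 : qf T (2*m+2) (T/2) = 0 := by rw [qf_half T (by omega : 2*m+2 ≠ 0), hh0, neg_zero]
      have hhderiv : ∀ s, HasDerivAt (fun u => c * qf T (2*m+2) u) (c * qf T (2*m+1) s) s :=
        fun s => (qf_hasDeriv T (2*m+1) s).const_mul c
      have hhcont : Continuous (fun u => c * qf T (2*m+2) u) := continuous_const.mul (qf_cont T _)
      have hanti : StrictAntiOn (fun u => c * qf T (2*m+2) u) (Set.Icc 0 (T/4)) := by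
        apply strictAntiOn_of_deriv_neg (convex_Icc 0 (T/4)) hhcont.continuousOn
        intro s hs
        rw [interior_Icc] at hs
        rw [(hhderiv s).deriv]
        have := hgmono (Set.mem_Icc.mpr ⟨le_of_lt hs.1, by linarith [hs.2]⟩)
          (Set.mem_Icc.mpr ⟨le_of_lt hT4, le_of_lt hT42⟩) hs.2
        simpa [hgq] using this
      have hmono2 : StrictMonoOn (fun u => c * qf T (2*m+2) u) (Set.Icc (T/4) (T/2)) := by
        apply strictMonoOn_of_deriv_pos (convex_Icc (T/4) (T/2)) hhcont.continuousOn
        intro s hs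
        rw [interior_Icc] at hs
        rw [(hhderiv s).deriv]
        have := hgmono (Set.mem_Icc.mpr ⟨le_of_lt hT4, le_of_lt hT42⟩)
          (Set.mem_Icc.mpr ⟨by linarith [hs.1], le_of_lt hs.2⟩) hs.1
        simpa [hgq] using this
      have key : c * qf T (2*(m+1)) t < 0 := by
        rw [show 2*(m+1) = 2*m+2 by ring]
        obtain ⟨h1, h2⟩ := ht
        rcases le_or_gt t (T/4) with h | h
        · have := hanti (Set.mem_Icc.mpr ⟨le_refl 0, le_of_lt hT4⟩)
            (Set.mem_Icc.mpr ⟨le_of_lt h1, h⟩) h1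
          simpa [hh0] using this
        · have := hmono2 (Set.mem_Icc.mpr ⟨le_of_lt h, le_of_lt h2⟩)
            (Set.mem_Icc.mpr ⟨le_of_lt hT42, le_refl _⟩) h2
          simpa [hhT2] using this
      rw [pow_succ]
      nlinarith [key]

lemma euler_neg {n : ℕ} (hn : n % 4 = 2) : eulerNumber n < 0 := by
  obtain ⟨m, rfl⟩ : ∃ m, n = 2*m := ⟨n/2, by omega⟩
  have hm : 1 ≤ m := by omega
  have hmodd : Odd m := by
    rcases Nat.even_or_odd m with h | h
    · obtain ⟨a, ha⟩ := h; omega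
    · exact h
  have h1 := qsign 1 one_pos m hm (1/4) (by norm_num)
  rw [hmodd.neg_one_pow] at h1
  have h2 : qf 1 (2*m) ((1:ℝ)/4) = (eulerNumber (2*m) : ℝ) * 1^(2*m) / (4^(2*m) * (Nat.factorial (2*m))) := qf_quarter 1 (2*m)
  rw [h2, one_pow, mul_one] at h1
  have hpos : (0:ℝ) < 4^(2*m) * (Nat.factorial (2*m)) := by positivity
  have : (eulerNumber (2*m) : ℝ) < 0 := by
    by_contra hcon
    push_neg at hcon
    have : 0 ≤ (eulerNumber (2*m) : ℝ) / (4^(2*m) * (Nat.factorial (2*m))) := div_nonneg hcon (le_of_lt hpos)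
    linarith
  exact_mod_cast this

lemma qf_integral (T : ℝ) (k : ℕ) (a b : ℝ) :
    ∫ s in a..b, qf T k s = qf T (k+1) b - qf T (k+1) a :=
  intervalIntegral.integral_eq_sub_of_hasDerivAt (fun t _ => qf_hasDeriv T k t)
    ((qf_cont T k).intervalIntegrable a b)

noncomputable def Phi (T : ℝ) (k : ℕ) (t : ℝ) : ℝ :=
  if t ≤ T/2 then qf T k t else -qf T k (t - T/2)

lemma Phi_int_left (T : ℝ) (k : ℕ) {a b : ℝ} (ha : a ≤ T/2) (hb : b ≤ T/2) :
    IntervalIntegrable (Phi T k) volume a b := by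
  apply ((qf_cont T k).intervalIntegrable a b).congr
  intro s hs
  have : s ≤ T/2 := le_trans hs.2 (max_le ha hb)
  simp [Phi, if_pos this]

lemma Phi_int_right (T : ℝ) (k : ℕ) {a b : ℝ} (ha : T/2 ≤ a) (hb : T/2 ≤ b) :
    IntervalIntegrable (Phi T k) volume a b := by
  have hc : Continuous (fun s => -qf T k (s - T/2)) := ((qf_cont T k).comp (by fun_prop)).neg
  apply (hc.intervalIntegrable a b).congr
  intro s hs
  have : ¬ (s ≤ T/2) := by
    have := hs.1
    have : T/2 ≤ min a b := le_min ha hb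
    push_neg
    exact lt_of_le_of_lt this hs.1
  simp [Phi, if_neg this]

lemma Phi_int_left_eq (T : ℝ) (k : ℕ) {t : ℝ} (h0 : 0 ≤ t) (h : t ≤ T/2) :
    ∫ s in (0:ℝ)..t, Phi T k s = qf T (k+1) t - qf T (k+1) 0 := by
  rw [← qf_integral]
  apply intervalIntegral.integral_congr
  intro s hs
  rw [Set.uIcc_of_le h0] at hs
  have : s ≤ T/2 := le_trans hs.2 h
  simp [Phi, if_pos this]

lemma Phi_int_right_eq (T : ℝ) (k : ℕ) {t : ℝ} (h : T/2 < t) :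
    ∫ s in (T/2)..t, Phi T k s = -(qf T (k+1) (t - T/2) - qf T (k+1) 0) := by
  have h1 : ∫ s in (T/2)..t, Phi T k s = ∫ s in (T/2)..t, -qf T k (s - T/2) := by
    apply intervalIntegral.integral_congr_ae
    refine Filter.Eventually.of_forall ?_
    intro s hs
    rw [Set.uIoc_of_le (le_of_lt h)] at hs
    have : ¬ (s ≤ T/2) := not_le.mpr hs.1
    simp [Phi, if_neg this]
  rw [h1, intervalIntegral.integral_neg, intervalIntegral.integral_comp_sub_right (fun u => qf T k u) (T/2),
    sub_self, qf_integral]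

/-- Sharpness of the period bound for `n ≡ 2 (mod 4)`: with `L = 1/(Kₙ·Tⁿ)` and the
two-valued deviation `τ(t) = 3T/4` on `[0,T/2]`, `τ(t) = T/4` on `(T/2,T]`, the periodic
problem `x⁽ⁿ⁾ = L·x(τ(·))` has a non-constant solution. -/
theorem sharpness_n_mod_four_eq_two (n : ℕ) (hn : n % 4 = 2) (T : ℝ) (hT : 0 < T) :
    ∃ x g : ℝ → ℝ, PeriodicACSol n T x g ∧
      (g =ᵐ[volume.restrict (Set.Icc (0 : ℝ) T)]
        fun t => (1 / ((favardK n : ℝ) * T ^ n)) *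
          x (if t ≤ T / 2 then 3 * T / 4 else T / 4)) ∧
      ¬ ∀ t ∈ Set.Icc (0 : ℝ) T, x t = x 0 := by
  have hne : eulerNumber n < 0 := euler_neg hn
  have hneR : (eulerNumber n : ℝ) < 0 := by exact_mod_cast hne
  have hnodd : ¬ Odd n := by
    rw [Nat.not_odd_iff_even]
    exact ⟨n/2, by omega⟩
  have hK : (favardK n : ℝ) = -(eulerNumber n : ℝ) / (4^n * (Nat.factorial n)) := by
    rw [favardK, if_neg hnodd, abs_of_neg hne]
    push_cast
    ring
  have hfacpos : (0:ℝ) < 4^n * (Nat.factorial n) := by positivity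
  have hKpos : (0:ℝ) < (favardK n : ℝ) := by
    have hE : (0:ℝ) < -(eulerNumber n : ℝ) := by linarith
    rw [hK]
    positivity
  have hKT : (0:ℝ) < (favardK n : ℝ) * T^n := by positivity
  set L : ℝ := 1 / ((favardK n : ℝ) * T ^ n) with hL
  have hquarter : qf T n (T/4) = -((favardK n : ℝ) * T^n) := by
    rw [qf_quarter, hK]
    field_simp
  have hT2 : (0:ℝ) ≤ T/2 := by linarith
  have hPhi0 : ∀ k, Phi T k 0 = qf T k 0 := fun k => if_pos hT2
  have hxq : Phi T n (3*T/4) = (favardK n : ℝ) * T^n := by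
    rw [Phi, if_neg (by intro h; linarith), show 3*T/4 - T/2 = T/4 by ring, hquarter, neg_neg]
  have hxq' : Phi T n (T/4) = -((favardK n : ℝ) * T^n) := by
    rw [Phi, if_pos (by linarith), hquarter]
  refine ⟨Phi T n, Phi T 0, ⟨fun i => Phi T (n - i), by simp, by simp, ?_⟩, ?_, ?_⟩
  · intro i hi
    obtain ⟨j, hj⟩ : ∃ j, n - i = j + 1 := ⟨n - i - 1, by omega⟩
    have hj' : n - (i+1) = j := by omega
    beta_reduce
    rw [hj, hj']
    refine ⟨(Phi_int_left T j hT2 le_rfl).trans (Phi_int_right T j le_rfl (by linarith)), ?_, ?_⟩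
    · intro t ht
      obtain ⟨ht0, htT⟩ := ht
      rw [hPhi0]
      rcases le_or_gt t (T/2) with h | h
      · rw [Phi, if_pos h, Phi_int_left_eq T j ht0 h]
        ring
      · rw [Phi, if_neg (not_le.mpr h),
          ← intervalIntegral.integral_add_adjacent_intervals
            (Phi_int_left T j hT2 le_rfl) (Phi_int_right T j le_rfl (le_of_lt h)),
          Phi_int_left_eq T j hT2 le_rfl, Phi_int_right_eq T j h,
          qf_half T (by omega : j + 1 ≠ 0)]
        ring
    · rw [hPhi0, Phi, if_neg (by intro hcon; linarith), show T - T/2 = T/2 by ring,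
        qf_half T (by omega : j + 1 ≠ 0), neg_neg]
  · refine Filter.Eventually.of_forall ?_
    intro t
    show Phi T 0 t = L * Phi T n (if t ≤ T / 2 then 3 * T / 4 else T / 4)
    rcases le_or_gt t (T/2) with h | h
    · rw [if_pos h, Phi, if_pos h, qf_zero, hxq]
      field_simp
      rw [hL, one_div, mul_assoc, inv_mul_cancel₀ (ne_of_gt hKT)]
    · rw [if_neg (not_le.mpr h), Phi, if_neg (not_le.mpr h), qf_zero, hxq']
      field_simp
      rw [hL, one_div, mul_assoc, inv_mul_cancel₀ (ne_of_gt hKT)]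
  · intro hcon
    have h1 := hcon (T/4) ⟨by linarith, by linarith⟩
    have h2 := hcon (3*T/4) ⟨by linarith, by linarith⟩
    rw [hxq'] at h1
    rw [hxq] at h2
    have := h1.trans h2.symm
    linarith
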